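/- Theorem (tightness of Perturbed GDA for optimization stationarity). Let ε ∈ (0,1) and ℓ, D_Y, r_y > 0, and consider the hard OS instance. Run Perturbed GDA on f̃(x,y) = f(x,y) − (r_y/2)y² with step sizes α, c > 0 satisfying ℓc < 1, initialized at x_0 := ((3D_Y + 2)/(ℓ·D_Y))·ε and y_0 := D_Y, and assume x_0 ≤ 1. Then for every T ∈ ℕ, if x_T is an ε-optimization-stationary point of min_{x∈ℝ} max_{y∈[0,D_Y]} f(x,y), then (1 − ℓ·c·D_Y/(D_Y + 1))^T ≤ 1/2. -/

import Mathlib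

noncomputable section

/-- The function `h` of the hard OS instance. -/
def hOS (l Dy : ℝ) (x : ℝ) : ℝ :=
  if |x| ≤ 1 then l / (2 * (Dy + 1)) * x ^ 2
  else if |x| < 2 then l / (Dy + 1) - l / (2 * (Dy + 1)) * (|x| - 2) ^ 2
  else l / (Dy + 1)

/-- The derivative of `hOS` in `x`. -/
def hOS' (l Dy : ℝ) (x : ℝ) : ℝ :=
  if |x| ≤ 1 then l / (Dy + 1) * x
  else if |x| < 2 then -(l / (Dy + 1)) * (|x| - 2) * Real.sign x
  else 0

/-- Metric projection of `v` onto the interval `[0, Dy]`. -/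
def projI (Dy v : ℝ) : ℝ := max 0 (min Dy v)

/-- Value function `Φ(z) = max_{y ∈ [0, Dy]} h(z)·y` of the hard OS instance. -/
def PhiOS (l Dy : ℝ) (z : ℝ) : ℝ :=
  sSup ((fun y => hOS l Dy z * y) '' Set.Icc (0 : ℝ) Dy)

/-- `x` is an `ε`-optimization-stationary point of the hard OS instance:
the minimizer `p` of `Φ(z) + ℓ(z − x)²` over `z ∈ ℝ` satisfies `|p − x| ≤ ε/(2ℓ)`. -/
def IsOS1 (l Dy ε x : ℝ) : Prop :=
  ∃ p : ℝ, (∀ z : ℝ, PhiOS l Dy p + l * (p - x) ^ 2 ≤ PhiOS l Dy z + l * (z - x) ^ 2) ∧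
    |p - x| ≤ ε / (2 * l)

lemma hOS_nonneg (l Dy : ℝ) (hl : 0 < l) (hDy : 0 < Dy) (x : ℝ) : 0 ≤ hOS l Dy x := by
  have hd : (0:ℝ) < Dy + 1 := by linarith
  have hb : 0 < l / (2 * (Dy + 1)) := by positivity
  have hab : l / (Dy + 1) = 2 * (l / (2 * (Dy + 1))) := by field_simp
  unfold hOS
  split_ifs with h1 h2
  · positivity
  · have h1' : 1 < |x| := not_le.mp h1
    have hs : (|x| - 2) ^ 2 ≤ 1 := by nlinarith
    nlinarith [mul_le_mul_of_nonneg_left hs hb.le]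
  · positivity

lemma hOS_of_mem (l Dy x : ℝ) (h0 : 0 ≤ x) (h1 : x ≤ 1) :
    hOS l Dy x = l / (2 * (Dy + 1)) * x ^ 2 := by
  unfold hOS
  rw [abs_of_nonneg h0, if_pos h1]

lemma hOS_lb (l Dy : ℝ) (hl : 0 < l) (hDy : 0 < Dy) (x : ℝ) (hx : 1 ≤ x) :
    l / (2 * (Dy + 1)) ≤ hOS l Dy x := by
  have hd : (0:ℝ) < Dy + 1 := by linarith
  have hb : 0 < l / (2 * (Dy + 1)) := by positivity
  have hab : l / (Dy + 1) = 2 * (l / (2 * (Dy + 1))) := by field_simp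
  have hax : |x| = x := abs_of_nonneg (by linarith)
  unfold hOS
  rw [hax]
  split_ifs with h1 h2
  · have : x = 1 := le_antisymm h1 hx
    rw [this]; nlinarith
  · have hs : (x - 2) ^ 2 ≤ 1 := by nlinarith
    nlinarith [mul_le_mul_of_nonneg_left hs hb.le]
  · nlinarith


lemma PhiOS_eq (l Dy : ℝ) (hl : 0 < l) (hDy : 0 < Dy) (z : ℝ) :
    PhiOS l Dy z = hOS l Dy z * Dy := by
  apply IsGreatest.csSup_eq
  constructor
  · exact ⟨Dy, ⟨le_of_lt hDy, le_refl Dy⟩, rfl⟩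
  · rintro _ ⟨y, ⟨hy0, hyD⟩, rfl⟩
    exact mul_le_mul_of_nonneg_left hyD (hOS_nonneg l Dy hl hDy z)

lemma gda_key (l Dy x w : ℝ) (hl : 0 < l) (hDy : 0 < Dy) (hx1 : x ≤ 1)
    (hw0 : 0 < w) (hw1 : w < 1) (hwx : (3 * Dy + 2) * w = 2 * x * (Dy + 1)) :
    ∀ z, w < z → hOS l Dy w * Dy + l * (w - x) ^ 2 < hOS l Dy z * Dy + l * (z - x) ^ 2 := by
  have hd : (0:ℝ) < Dy + 1 := by linarith
  have hwe := hOS_of_mem l Dy w hw0.le hw1.le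
  have case1 : ∀ z, w < z → z ≤ 1 →
      hOS l Dy w * Dy + l * (w - x) ^ 2 < hOS l Dy z * Dy + l * (z - x) ^ 2 := by
    intro z hzw hz1
    have hze := hOS_of_mem l Dy z (by linarith) hz1
    rw [hwe, hze]
    have heq : l / (2 * (Dy + 1)) * z ^ 2 * Dy + l * (z - x) ^ 2
        - (l / (2 * (Dy + 1)) * w ^ 2 * Dy + l * (w - x) ^ 2)
        = l * (3 * Dy + 2) / (2 * (Dy + 1)) * (z - w) ^ 2 := by
      field_simp
      linear_combination (2 * (z - w)) * hwx
    have hpos : 0 < l * (3 * Dy + 2) / (2 * (Dy + 1)) * (z - w) ^ 2 := by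
      apply mul_pos (by positivity) (pow_pos (sub_pos.mpr hzw) 2)
    linarith
  intro z hzw
  rcases le_or_gt z 1 with hz1 | hz1
  · exact case1 z hzw hz1
  · have h1 := case1 1 hw1 le_rfl
    have h2 := hOS_lb l Dy hl hDy z hz1.le
    have h1e := hOS_of_mem l Dy 1 (by norm_num) le_rfl
    rw [h1e] at h1
    have hsq : (1 - x) ^ 2 ≤ (z - x) ^ 2 := by nlinarith
    have hb : (0:ℝ) < l / (2 * (Dy + 1)) := by positivity
    nlinarith [mul_le_mul_of_nonneg_right h2 hDy.le]

/-- Tightness of Perturbed GDA for optimization stationarity on the hard OS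
instance. -/
theorem perturbed_gda_os_tightness
    (l Dy ry ε α c : ℝ) (xs ys : ℕ → ℝ)
    (hl : 0 < l) (hDy : 0 < Dy) (hry : 0 < ry) (hε : 0 < ε) (hε1 : ε < 1)
    (hα : 0 < α) (hc : 0 < c) (hlc : l * c < 1)
    -- initialization
    (hx0 : xs 0 = (3 * Dy + 2) / (l * Dy) * ε)
    (hy0 : ys 0 = Dy)
    (hx0le : xs 0 ≤ 1)
    -- Perturbed GDA on f̃(x,y) = h(x)·y − (r_y/2) y²
    (hxrec : ∀ t, xs (t + 1) = xs t - c * (hOS' l Dy (xs t) * ys t))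
    (hyrec : ∀ t, ys (t + 1) = projI Dy (ys t + α * (hOS l Dy (xs (t + 1)) - ry * ys t))) :
    ∀ T : ℕ, IsOS1 l Dy ε (xs T) →
      (1 - l * c * Dy / (Dy + 1)) ^ T ≤ 1 / 2 := by
  have hd : (0:ℝ) < Dy + 1 := by linarith
  set q : ℝ := 1 - l * c * Dy / (Dy + 1) with hq
  have hqd : q * (Dy + 1) = Dy + 1 - l * c * Dy := by
    rw [hq]; field_simp
  have hq0 : 0 < q := by
    have h1 : l * c * Dy / (Dy + 1) < 1 := by
      rw [div_lt_one hd]; nlinarith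
    rw [hq]; linarith
  -- y bounds
  have hy : ∀ t, 0 ≤ ys t ∧ ys t ≤ Dy := by
    intro t
    cases t with
    | zero => rw [hy0]; exact ⟨hDy.le, le_refl _⟩
    | succ n =>
      rw [hyrec n]
      exact ⟨le_max_left _ _, max_le hDy.le (min_le_left _ _)⟩
  -- x bounds
  have hx0pos : 0 < xs 0 := by rw [hx0]; positivity
  have hx : ∀ t, 0 < xs t ∧ xs t ≤ 1 ∧ xs 0 * q ^ t ≤ xs t := by
    intro t
    induction t with
    | zero => exact ⟨hx0pos, hx0le, by simp⟩
    | succ n ih =>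
      obtain ⟨hpos, hle1, hlb⟩ := ih
      obtain ⟨hy0n, hyDn⟩ := hy n
      have habs : |xs n| ≤ 1 := by rw [abs_of_pos hpos]; exact hle1
      have hder : hOS' l Dy (xs n) = l / (Dy + 1) * xs n := by
        unfold hOS'; rw [if_pos habs]
      have he : xs (n + 1) * (Dy + 1) = xs n * (Dy + 1) - c * l * xs n * ys n := by
        rw [hxrec n, hder]; field_simp
      have hge : xs n * q * (Dy + 1) ≤ xs (n + 1) * (Dy + 1) := by
        rw [he]
        have : c * l * xs n * ys n ≤ c * l * xs n * Dy := by
          apply mul_le_mul_of_nonneg_left hyDn (by positivity)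
        nlinarith [hqd]
      have hge' : xs n * q ≤ xs (n + 1) := le_of_mul_le_mul_right (by linarith) hd
      have hpos' : 0 < xs (n + 1) := lt_of_lt_of_le (by positivity) hge'
      have hle' : xs (n + 1) ≤ xs n := by
        have : xs (n + 1) * (Dy + 1) ≤ xs n * (Dy + 1) := by
          rw [he]
          nlinarith [mul_nonneg (mul_nonneg (mul_nonneg hc.le hl.le) hpos.le) hy0n]
        exact le_of_mul_le_mul_right this hd
      refine ⟨hpos', le_trans hle' hle1, ?_⟩
      calc xs 0 * q ^ (n + 1) = (xs 0 * q ^ n) * q := by ring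
        _ ≤ xs n * q := mul_le_mul_of_nonneg_right hlb hq0.le
        _ ≤ xs (n + 1) := hge'
  -- main
  intro T hOSS
  obtain ⟨hTpos, hTle1, hTlb⟩ := hx T
  set x := xs T with hxT
  -- show x ≤ (3Dy+2)/(2 l Dy) * ε
  have hxsmall : x ≤ (3 * Dy + 2) / (l * Dy) * ε / 2 := by
    by_contra hbig
    push_neg at hbig
    obtain ⟨p, hmin, hclose⟩ := hOSS
    set w : ℝ := 2 * x * (Dy + 1) / (3 * Dy + 2) with hw
    have h32 : (0:ℝ) < 3 * Dy + 2 := by linarith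
    have hwx : (3 * Dy + 2) * w = 2 * x * (Dy + 1) := by rw [hw]; field_simp
    have hw0 : 0 < w := by rw [hw]; positivity
    have hwltx : w < x := by nlinarith
    have hw1 : w < 1 := lt_of_lt_of_le hwltx hTle1
    -- gap : ε / (2*l) < x - w
    have hxw : (3 * Dy + 2) * (x - w) = x * Dy := by linear_combination -hwx
    have hbig2 : (3 * Dy + 2) * ε < x * (l * Dy * 2) := by
      rw [div_mul_eq_mul_div, div_div] at hbig
      exact (div_lt_iff₀ (by positivity)).mp hbig
    have hgap : ε / (2 * l) < x - w := by
      rw [div_lt_iff₀ (by positivity)]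
      nlinarith [hbig2, hxw, h32, hl]
    have hpge : x - ε / (2 * l) ≤ p := by
      have := (abs_le.mp hclose).1
      linarith
    have hpw : w < p := by linarith
    have hkey := gda_key l Dy x w hl hDy hTle1 hw0 hw1 hwx p hpw
    have hmw := hmin w
    rw [PhiOS_eq l Dy hl hDy p, PhiOS_eq l Dy hl hDy w] at hmw
    linarith
  -- conclude
  have : xs 0 * q ^ T ≤ xs 0 / 2 := by
    have hx2 : x ≤ xs 0 / 2 := by rw [hx0]; linarith [hxsmall]
    linarith [hTlb, hx2]
  have h2 : q ^ T * xs 0 ≤ (1/2) * xs 0 := by linarith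
  have := le_of_mul_le_mul_right h2 hx0pos
  linarith
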